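/- Let f ∈ L²(ℝⁿ), γ ∈ (0,1), and let u(x,t) := e^{-t√L}f(x) where L = -Δ+V with 0 ≤ V ∈ L¹_loc(ℝⁿ), so that Lu - ∂²_t u = 0 on the upper half-space. Suppose the Moser-type local boundedness estimate holds: sup_{Y ∈ B(Y₀,r)} |u(Y)| ≤ C(n,γ) ( r^{-(n+1)} ∫_{B(Y₀,2r)} |u(Y)|^γ dY )^{1/γ} for weak solutions. Then for all x ∈ ℝⁿ, the aperture-1/4 non-tangential maximal function satisfies 𝒩_P^{1/4}(f)(x) ≤ C { ℳ( [ℛ_P(f)]^γ )(x) }^{1/γ}, where ℳ is the Hardy–Littlewood maximal operator and ℛ_P(f)(x) := sup_{t>0} |e^{-t√L}f(x)|. -/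

import Mathlib

open MeasureTheory Metric Set ENNReal

/-- The uncentered Hardy–Littlewood maximal function on `ℝⁿ` (with supremum-norm
balls) of an `ℝ≥0∞`-valued function. -/
noncomputable def uncMax (nn : ℕ) (g : (Fin nn → ℝ) → ℝ≥0∞) (x : Fin nn → ℝ) : ℝ≥0∞ :=
  ⨆ (c : Fin nn → ℝ) (r : ℝ) (_ : 0 < r) (_ : x ∈ ball c r),
    (volume (ball c r))⁻¹ * ∫⁻ z in ball c r, g z

/-- Tonelli-type inequality, valid without measurability of `g`. -/
lemma aux_prod_fst_le {α β : Type*} [MeasurableSpace α] [MeasurableSpace β]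
    (μ : Measure α) (ν : Measure β) [SFinite ν] (hν : ν univ ≠ ⊤) (g : α → ℝ≥0∞) :
    ∫⁻ Z : α × β, g Z.1 ∂(μ.prod ν) ≤ (∫⁻ z, g z ∂μ) * ν univ := by
  rw [← iSup_lintegral_measurable_le_eq_lintegral (fun Z : α × β => g Z.1)]
  refine iSup_le fun φ => iSup_le fun hφ => iSup_le fun hle => ?_
  calc ∫⁻ Z, φ Z ∂(μ.prod ν) = ∫⁻ z, ∫⁻ s, φ (z, s) ∂ν ∂μ :=
        lintegral_prod _ hφ.aemeasurable
  _ ≤ ∫⁻ z, g z * ν univ ∂μ := by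
      refine lintegral_mono fun z => ?_
      calc ∫⁻ s, φ (z, s) ∂ν ≤ ∫⁻ _, g z ∂ν := lintegral_mono fun s => hle (z, s)
      _ = g z * ν univ := lintegral_const _
  _ = (∫⁻ z, g z ∂μ) * ν univ := lintegral_mul_const' _ _ hν

/-- If `u(y,t) = e^{-t√L}f(y)` satisfies the Moser-type local boundedness estimate on
balls of the upper half-space `ℝ^{n+1}₊`, then the aperture-`1/4` non-tangential
maximal function is pointwise dominated by
`C (ℳ([ℛ_P f]^γ))^{1/γ}`, where `ℛ_P f(z) = sup_{t>0}|u(z,t)|`. -/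
theorem stmt_17 (nn : ℕ) (γ : ℝ) (hγ : 0 < γ ∧ γ < 1)
    (u : ((Fin nn → ℝ) × ℝ) → ℂ) (Cm : ℝ) (hCm : 0 < Cm)
    (hMoser : ∀ (Y₀ : (Fin nn → ℝ) × ℝ) (r : ℝ), 0 < r →
      ball Y₀ (2 * r) ⊆ {w : (Fin nn → ℝ) × ℝ | 0 < w.2} →
      ∀ Y ∈ ball Y₀ r,
        ‖u Y‖ ≤ Cm * (r ^ (-(nn + 1 : ℝ)) * ∫ Z in ball Y₀ (2 * r), ‖u Z‖ ^ γ) ^ (1/γ)) :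
    ∃ C : ℝ≥0∞, 0 < C ∧ C ≠ ⊤ ∧ ∀ x : Fin nn → ℝ,
      (⨆ (t : ℝ) (_ : 0 < t) (y : Fin nn → ℝ) (_ : dist y x < t / 4),
          (‖u (y, t)‖₊ : ℝ≥0∞)) ≤
        C * (uncMax nn
            (fun z => (⨆ (t : ℝ) (_ : 0 < t), (‖u (z, t)‖₊ : ℝ≥0∞)) ^ γ) x) ^ (1/γ) := by
  obtain ⟨hγ0, hγ1⟩ := hγ
  set K : ℝ≥0∞ := ENNReal.ofReal (Cm ^ γ * 4 ^ (nn + 1)) with hK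
  have hKreal : (0:ℝ) < Cm ^ γ * 4 ^ (nn + 1) := by positivity
  have hK0 : 0 < K := ENNReal.ofReal_pos.2 hKreal
  have hKtop : K ≠ ⊤ := ENNReal.ofReal_ne_top
  refine ⟨K ^ (1/γ), ENNReal.rpow_pos hK0 hKtop, rpow_ne_top_of_nonneg (by positivity) hKtop,
    fun x => ?_⟩
  set Rf : (Fin nn → ℝ) → ℝ≥0∞ :=
    fun z => (⨆ (t : ℝ) (_ : 0 < t), (‖u (z, t)‖₊ : ℝ≥0∞)) ^ γ with hRf
  set M : ℝ≥0∞ := uncMax nn Rf x with hM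
  refine iSup_le fun t => iSup_le fun ht => iSup_le fun y => iSup_le fun hyx => ?_
  -- apply the Moser estimate at `(y,t)` with radius `t/4`
  have hr : (0:ℝ) < t/4 := by linarith
  have hsub : ball ((y, t) : (Fin nn → ℝ) × ℝ) (2 * (t/4)) ⊆
      {w : (Fin nn → ℝ) × ℝ | 0 < w.2} := by
    intro w hw
    have h1 : dist w.2 t ≤ dist w (y, t) := le_max_right _ _
    have h2 : |w.2 - t| < 2 * (t/4) := lt_of_le_of_lt h1 (mem_ball.1 hw)
    have := abs_lt.1 h2
    simp only [mem_setOf_eq]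
    linarith [this.1]
  have hmos := hMoser (y, t) (t/4) hr hsub (y, t) (mem_ball_self hr)
  set I : ℝ := ∫ Z in ball ((y, t) : (Fin nn → ℝ) × ℝ) (2 * (t/4)), ‖u Z‖ ^ γ with hI
  have hI0 : 0 ≤ I := integral_nonneg fun Z => Real.rpow_nonneg (norm_nonneg _) γ
  have hX0 : 0 ≤ (t/4) ^ (-(nn + 1 : ℝ)) * I :=
    mul_nonneg (Real.rpow_nonneg hr.le _) hI0
  -- raise the Moser estimate to the power γ
  have hpow : ‖u (y, t)‖ ^ γ ≤ Cm ^ γ * ((t/4) ^ (-(nn + 1 : ℝ)) * I) := by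
    have h1 : ‖u (y, t)‖ ^ γ ≤ (Cm * ((t/4) ^ (-(nn + 1 : ℝ)) * I) ^ (1/γ)) ^ γ :=
      Real.rpow_le_rpow (norm_nonneg _) hmos hγ0.le
    have h2 : (Cm * ((t/4) ^ (-(nn + 1 : ℝ)) * I) ^ (1/γ)) ^ γ
        = Cm ^ γ * ((t/4) ^ (-(nn + 1 : ℝ)) * I) := by
      rw [Real.mul_rpow hCm.le (Real.rpow_nonneg hX0 _), ← Real.rpow_mul hX0,
        one_div_mul_cancel hγ0.ne', Real.rpow_one]
    rw [h2] at h1; exact h1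
  -- pass to ℝ≥0∞
  have hcoe : (‖u (y, t)‖₊ : ℝ≥0∞) ^ γ
      ≤ ENNReal.ofReal (Cm ^ γ * (t/4) ^ (-(nn + 1 : ℝ))) * ENNReal.ofReal I := by
    rw [← (@id (ENNReal.ofReal ‖u (y, t)‖ = (‖u (y, t)‖₊ : ℝ≥0∞)) (ofReal_norm (u (y, t)))), ENNReal.ofReal_rpow_of_nonneg (norm_nonneg _) hγ0.le,
      ← ENNReal.ofReal_mul (by positivity)]
    exact ENNReal.ofReal_le_ofReal (by rw [mul_assoc]; exact hpow)
  -- bound the Bochner integral by a lower Lebesgue integral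
  have hIle : ENNReal.ofReal I
      ≤ ∫⁻ Z in ball ((y, t) : (Fin nn → ℝ) × ℝ) (2 * (t/4)), ENNReal.ofReal (‖u Z‖ ^ γ) := by
    by_cases hint : Integrable (fun Z => ‖u Z‖ ^ γ)
        (volume.restrict (ball ((y, t) : (Fin nn → ℝ) × ℝ) (2 * (t/4))))
    · exact le_of_eq (ofReal_integral_eq_lintegral_ofReal hint
        (Filter.Eventually.of_forall fun Z => Real.rpow_nonneg (norm_nonneg _) γ))
    · rw [hI, integral_undef hint]; simp
  -- bound pointwise by the radial maximal function
  have hptle : (∫⁻ Z in ball ((y, t) : (Fin nn → ℝ) × ℝ) (2 * (t/4)),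
        ENNReal.ofReal (‖u Z‖ ^ γ))
      ≤ ∫⁻ Z in ball ((y, t) : (Fin nn → ℝ) × ℝ) (2 * (t/4)), Rf Z.1 := by
    rw [← lintegral_indicator measurableSet_ball, ← lintegral_indicator measurableSet_ball]
    refine lintegral_mono fun Z => ?_
    by_cases hZ : Z ∈ ball ((y, t) : (Fin nn → ℝ) × ℝ) (2 * (t/4))
    · rw [indicator_of_mem hZ, indicator_of_mem hZ]
      have hZ2 : 0 < Z.2 := hsub hZ
      have hle1 : (‖u Z‖₊ : ℝ≥0∞) ≤ ⨆ (s : ℝ) (_ : 0 < s), (‖u (Z.1, s)‖₊ : ℝ≥0∞) := by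
        have : u (Z.1, Z.2) = u Z := by rw [Prod.mk.eta]
        refine le_iSup_of_le Z.2 (le_iSup_of_le hZ2 ?_)
        rw [this]
      calc ENNReal.ofReal (‖u Z‖ ^ γ)
          = (‖u Z‖₊ : ℝ≥0∞) ^ γ := by
            rw [← (@id (ENNReal.ofReal ‖u Z‖ = (‖u Z‖₊ : ℝ≥0∞)) (ofReal_norm (u Z))), ENNReal.ofReal_rpow_of_nonneg (norm_nonneg _) hγ0.le]
      _ ≤ Rf Z.1 := ENNReal.rpow_le_rpow hle1 hγ0.le
    · rw [indicator_of_notMem hZ, indicator_of_notMem hZ]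
  -- split the product ball
  have hsplit : (∫⁻ Z in ball ((y, t) : (Fin nn → ℝ) × ℝ) (2 * (t/4)), Rf Z.1)
      ≤ (∫⁻ z in ball y (2 * (t/4)), Rf z) * ENNReal.ofReal t := by
    have hvol : (volume : Measure ((Fin nn → ℝ) × ℝ)) = (volume : Measure (Fin nn → ℝ)).prod
        (volume : Measure ℝ) := Measure.volume_eq_prod _ _
    have hB : (volume : Measure ℝ) (ball t (2 * (t/4))) = ENNReal.ofReal t := by
      rw [Real.volume_ball]; congr 1; ring
    rw [← ball_prod_same, hvol, ← Measure.prod_restrict]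
    have := aux_prod_fst_le ((volume : Measure (Fin nn → ℝ)).restrict (ball y (2 * (t/4))))
      ((volume : Measure ℝ).restrict (ball t (2 * (t/4))))
      (by rw [Measure.restrict_apply_univ, hB]; exact ofReal_ne_top) Rf
    rwa [Measure.restrict_apply_univ, hB] at this
  -- compare with the maximal function
  have hxmem : x ∈ ball y (2 * (t/4)) := by
    rw [mem_ball, dist_comm]
    linarith
  have hMge : (volume (ball y (2 * (t/4))))⁻¹ * ∫⁻ z in ball y (2 * (t/4)), Rf z ≤ M := by
    rw [hM, uncMax]
    exact le_iSup_of_le y (le_iSup_of_le (2 * (t/4))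
      (le_iSup_of_le (by linarith) (le_iSup_of_le hxmem le_rfl)))
  have hvA : volume (ball y (2 * (t/4))) = ENNReal.ofReal (t ^ nn) := by
    rw [Real.volume_pi_ball _ (by linarith : (0:ℝ) < 2 * (t/4))]
    congr 1
    rw [show (2:ℝ) * (2 * (t/4)) = t by ring]
    simp
  have hAint : (∫⁻ z in ball y (2 * (t/4)), Rf z) ≤ ENNReal.ofReal (t ^ nn) * M := by
    have hvA0 : volume (ball y (2 * (t/4))) ≠ 0 := by
      rw [hvA]; simp [ENNReal.ofReal_eq_zero, not_le]; positivity
    have hvAt : volume (ball y (2 * (t/4))) ≠ ⊤ := by rw [hvA]; exact ofReal_ne_top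
    calc (∫⁻ z in ball y (2 * (t/4)), Rf z)
        = volume (ball y (2 * (t/4))) *
          ((volume (ball y (2 * (t/4))))⁻¹ * ∫⁻ z in ball y (2 * (t/4)), Rf z) := by
          rw [← mul_assoc, ENNReal.mul_inv_cancel hvA0 hvAt, one_mul]
    _ ≤ volume (ball y (2 * (t/4))) * M := mul_le_mul_right hMge _
    _ = ENNReal.ofReal (t ^ nn) * M := by rw [hvA]
  -- put everything together
  have hmain : (‖u (y, t)‖₊ : ℝ≥0∞) ^ γ ≤ K * M := by
    calc (‖u (y, t)‖₊ : ℝ≥0∞) ^ γ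
        ≤ ENNReal.ofReal (Cm ^ γ * (t/4) ^ (-(nn + 1 : ℝ))) * ENNReal.ofReal I := hcoe
    _ ≤ ENNReal.ofReal (Cm ^ γ * (t/4) ^ (-(nn + 1 : ℝ))) *
          ((ENNReal.ofReal (t ^ nn) * M) * ENNReal.ofReal t) := by
        refine mul_le_mul_right ?_ _
        exact le_trans hIle (le_trans hptle (le_trans hsplit
          (mul_le_mul_left hAint _)))
    _ = (ENNReal.ofReal (Cm ^ γ * (t/4) ^ (-(nn + 1 : ℝ))) * ENNReal.ofReal (t ^ nn)
          * ENNReal.ofReal t) * M := by ring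
    _ = K * M := by
        rw [← ENNReal.ofReal_mul (by positivity), ← ENNReal.ofReal_mul (by positivity), hK]
        congr 2
        have ht4 : (0:ℝ) < t/4 := hr
        have hexp : (t/4 : ℝ) ^ (-(nn + 1 : ℝ)) = ((t/4) ^ (nn + 1 : ℕ))⁻¹ := by
          rw [show (-(nn + 1 : ℝ)) = -((nn + 1 : ℕ) : ℝ) by push_cast; ring,
            Real.rpow_neg ht4.le, Real.rpow_natCast]
        rw [hexp, div_pow]
        field_simp
        ring
  -- take γ-th roots
  have hroot : (‖u (y, t)‖₊ : ℝ≥0∞) = ((‖u (y, t)‖₊ : ℝ≥0∞) ^ γ) ^ (1/γ) := by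
    rw [← ENNReal.rpow_mul, mul_one_div_cancel hγ0.ne', ENNReal.rpow_one]
  calc (‖u (y, t)‖₊ : ℝ≥0∞) = ((‖u (y, t)‖₊ : ℝ≥0∞) ^ γ) ^ (1/γ) := hroot
  _ ≤ (K * M) ^ (1/γ) := ENNReal.rpow_le_rpow hmain (by positivity)
  _ = K ^ (1/γ) * M ^ (1/γ) := ENNReal.mul_rpow_of_nonneg _ _ (by positivity)
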